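/- Fix κ > 0, β ∈ ℝ, and a, b > 0 with a² + b² = 1. Let γ_k = exp(−κ(2πk)²) and define f^n_1 = (aγ₁)^n, f^n_{2^ℓ} = (aγ₁)^{n−ℓ} b ∏_{s=1}^{ℓ} γ_{2^s} for 1 ≤ ℓ ≤ n, f^n_k = 0 otherwise. Then the series c_β = Σ_{ℓ=1}^{∞} (2^ℓ)^{2β} ((aγ₁)^{-ℓ} b ∏_{s=1}^{ℓ} γ_{2^s})² converges, and Σ_{k>1} k^{2β}|f^n_k|² = (aγ₁)^{2n} c_{n,β} where c_{n,β} ↑ c_β; consequently ‖f^n‖²_{H^β} / |f^n_1|² → 1 + c_β as n → ∞, so all Sobolev norms ‖f^n‖_{H^β} decay at the rate (aγ₁)^n regardless of β. -/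

import Mathlib

/-- Pulsed-diffusion damping factor `γ_k = exp(−κ(2πk)²)`. -/
noncomputable def gam (κ : ℝ) (k : ℕ) : ℝ := Real.exp (-κ * (2 * Real.pi * k) ^ 2)

/-- The `ℓ`-th term `(2^ℓ)^{2β} ((aγ₁)^{−ℓ} b ∏_{s=1}^ℓ γ_{2^s})²` of the series `c_β`. -/
noncomputable def dterm (κ a b β : ℝ) (ℓ : ℕ) : ℝ :=
  ((2 : ℝ) ^ ℓ) ^ (2 * β) *
    (((a * gam κ 1) ^ ℓ)⁻¹ * b * ∏ s ∈ Finset.Icc 1 ℓ, gam κ (2 ^ s)) ^ 2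

lemma gam_pos (κ : ℝ) (k : ℕ) : 0 < gam κ k := Real.exp_pos _

lemma dterm_pos (κ a b β : ℝ) (ha : 0 < a) (hb : 0 < b) (ℓ : ℕ) :
    0 < dterm κ a b β ℓ := by
  have hq : 0 < a * gam κ 1 := mul_pos ha (gam_pos κ 1)
  apply mul_pos (Real.rpow_pos_of_pos (by positivity) _)
  have hp : 0 < ∏ s ∈ Finset.Icc 1 ℓ, gam κ (2 ^ s) :=
    Finset.prod_pos fun s _ => gam_pos κ _
  positivity

lemma gam_tendsto (κ : ℝ) (hκ : 0 < κ) :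
    Filter.Tendsto (fun ℓ : ℕ => gam κ (2 ^ (ℓ + 1))) Filter.atTop (nhds 0) := by
  have h1 : Filter.Tendsto (fun ℓ : ℕ => ((2 ^ (ℓ + 1) : ℕ) : ℝ) ^ 2)
      Filter.atTop Filter.atTop := by
    apply (Filter.tendsto_pow_atTop (two_ne_zero)).comp
    exact tendsto_natCast_atTop_atTop.comp
      ((tendsto_pow_atTop_atTop_of_one_lt one_lt_two).comp (Filter.tendsto_add_atTop_nat 1))
  have h2 : Filter.Tendsto (fun ℓ : ℕ => -κ * (2 * Real.pi * (2 ^ (ℓ + 1) : ℕ)) ^ 2)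
      Filter.atTop Filter.atBot := by
    have hpi := Real.pi_pos
    have he : ∀ ℓ : ℕ, -κ * (2 * Real.pi * (2 ^ (ℓ + 1) : ℕ)) ^ 2
        = (-(κ * (2 * Real.pi) ^ 2)) * ((2 ^ (ℓ + 1) : ℕ) : ℝ) ^ 2 := fun ℓ => by ring
    simp only [he]
    exact Filter.Tendsto.const_mul_atTop_of_neg (neg_lt_zero.mpr (by positivity)) h1
  exact Real.tendsto_exp_atBot.comp h2

lemma dterm_summable (κ a b β : ℝ) (hκ : 0 < κ) (ha : 0 < a) (hb : 0 < b) :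
    Summable (dterm κ a b β) := by
  have hq : 0 < a * gam κ 1 := mul_pos ha (gam_pos κ 1)
  apply summable_of_ratio_test_tendsto_lt_one (l := 0) one_pos
  · exact Filter.Eventually.of_forall fun ℓ => (dterm_pos κ a b β ha hb ℓ).ne'
  · have hrat : ∀ ℓ : ℕ, ‖dterm κ a b β (ℓ + 1)‖ / ‖dterm κ a b β ℓ‖
        = (2 : ℝ) ^ (2 * β) * ((a * gam κ 1)⁻¹ * gam κ (2 ^ (ℓ + 1))) ^ 2 := by
      intro ℓ
      rw [Real.norm_of_nonneg (dterm_pos κ a b β ha hb _).le,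
        Real.norm_of_nonneg (dterm_pos κ a b β ha hb _).le]
      rw [div_eq_iff (dterm_pos κ a b β ha hb ℓ).ne']
      unfold dterm
      rw [Finset.prod_Icc_succ_top (Nat.le_add_left 1 ℓ)]
      rw [pow_succ (2:ℝ) ℓ, Real.mul_rpow (by positivity) (by norm_num)]
      rw [pow_succ (a * gam κ 1) ℓ, mul_inv]
      ring
    have hlim : Filter.Tendsto
        (fun ℓ : ℕ => (2 : ℝ) ^ (2 * β) * ((a * gam κ 1)⁻¹ * gam κ (2 ^ (ℓ + 1))) ^ 2)
        Filter.atTop (nhds 0) := by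
      have h0 := gam_tendsto κ hκ
      have : Filter.Tendsto
          (fun ℓ : ℕ => ((a * gam κ 1)⁻¹ * gam κ (2 ^ (ℓ + 1))) ^ 2)
          Filter.atTop (nhds 0) := by
        have := ((h0.const_mul (a * gam κ 1)⁻¹).pow 2)
        simpa using this
      simpa using this.const_mul ((2 : ℝ) ^ (2 * β))
    simpa only [hrat] using hlim

theorem stmt18 (κ a b β : ℝ) (hκ : 0 < κ) (ha : 0 < a) (hb : 0 < b)
    (hab : a ^ 2 + b ^ 2 = 1)
    (f : ℕ → ℕ → ℂ)
    (hf1 : ∀ n, f n 1 = ((a * gam κ 1 : ℝ) : ℂ) ^ n)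
    (hf2 : ∀ n ℓ, 1 ≤ ℓ → ℓ ≤ n → f n (2 ^ ℓ) =
      ((a * gam κ 1 : ℝ) : ℂ) ^ (n - ℓ) * (b : ℂ) *
        ∏ s ∈ Finset.Icc 1 ℓ, ((gam κ (2 ^ s) : ℝ) : ℂ))
    (hf0 : ∀ n k, k ≠ 1 → (∀ ℓ, 1 ≤ ℓ → ℓ ≤ n → k ≠ 2 ^ ℓ) → f n k = 0) :
    Summable (dterm κ a b β) ∧
    (∀ n, (∑' k : {k : ℕ // 1 < k}, ((k.1 : ℝ)) ^ (2 * β) * ‖f n k.1‖ ^ 2) =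
      (a * gam κ 1) ^ (2 * n) * ∑ ℓ ∈ Finset.Icc 1 n, dterm κ a b β ℓ) ∧
    Filter.Tendsto
      (fun n => (‖f n 1‖ ^ 2 +
        ∑' k : {k : ℕ // 1 < k}, ((k.1 : ℝ)) ^ (2 * β) * ‖f n k.1‖ ^ 2) / ‖f n 1‖ ^ 2)
      Filter.atTop
      (nhds (1 + ∑' ℓ : {ℓ : ℕ // 1 ≤ ℓ}, dterm κ a b β ℓ.1)) := by
  have hq : 0 < a * gam κ 1 := mul_pos ha (gam_pos κ 1)
  set q := a * gam κ 1 with hqdef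
  have hsum := dterm_summable κ a b β hκ ha hb
  -- the tsum identity
  have key : ∀ n, (∑' k : {k : ℕ // 1 < k}, ((k.1 : ℝ)) ^ (2 * β) * ‖f n k.1‖ ^ 2) =
      q ^ (2 * n) * ∑ ℓ ∈ Finset.Icc 1 n, dterm κ a b β ℓ := by
    intro n
    have hind : (∑' k : {k : ℕ // 1 < k}, ((k.1 : ℝ)) ^ (2 * β) * ‖f n k.1‖ ^ 2) =
        ∑' k : ℕ, Set.indicator {k : ℕ | 1 < k}
          (fun k => ((k : ℝ)) ^ (2 * β) * ‖f n k‖ ^ 2) k :=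
      by exact tsum_subtype {k : ℕ | 1 < k} (fun k => ((k : ℝ)) ^ (2 * β) * ‖f n k‖ ^ 2)
    rw [hind]
    have hfin : ∀ k ∉ (Finset.Icc 1 n).image (fun ℓ => 2 ^ ℓ),
        Set.indicator {k : ℕ | 1 < k}
          (fun k => ((k : ℝ)) ^ (2 * β) * ‖f n k‖ ^ 2) k = 0 := by
      intro k hk
      by_cases h1 : 1 < k
      · rw [Set.indicator_apply, if_pos (show k ∈ {k : ℕ | 1 < k} from h1)]
        have hz : f n k = 0 := by
          apply hf0 n k (by omega)
          intro ℓ hℓ1 hℓn hkeq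
          exact hk (Finset.mem_image.mpr ⟨ℓ, Finset.mem_Icc.mpr ⟨hℓ1, hℓn⟩, hkeq.symm⟩)
        simp [hz]
      · rw [Set.indicator_apply, if_neg (show k ∉ {k : ℕ | 1 < k} from h1)]
    rw [tsum_eq_sum hfin]
    rw [Finset.sum_image (fun x _ y _ h => Nat.pow_right_injective le_rfl h)]
    rw [Finset.mul_sum]
    apply Finset.sum_congr rfl
    intro ℓ hℓ
    obtain ⟨hℓ1, hℓn⟩ := Finset.mem_Icc.mp hℓ
    have h2ℓ : 1 < 2 ^ ℓ := by
      calc 1 < 2 ^ 1 := by norm_num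
      _ ≤ 2 ^ ℓ := Nat.pow_le_pow_right (by norm_num) hℓ1
    rw [Set.indicator_apply, if_pos (show 2 ^ ℓ ∈ {k : ℕ | 1 < k} from h2ℓ)]
    rw [hf2 n ℓ hℓ1 hℓn]
    have hprod : 0 < ∏ s ∈ Finset.Icc 1 ℓ, gam κ (2 ^ s) :=
      Finset.prod_pos fun s _ => gam_pos κ _
    have hcast : ((q : ℂ)) ^ (n - ℓ) * (b : ℂ) *
        ∏ s ∈ Finset.Icc 1 ℓ, ((gam κ (2 ^ s) : ℝ) : ℂ)
        = ((q ^ (n - ℓ) * b * ∏ s ∈ Finset.Icc 1 ℓ, gam κ (2 ^ s) : ℝ) : ℂ) := by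
      push_cast; ring
    rw [hcast, Complex.norm_real, Real.norm_of_nonneg (by positivity)]
    unfold dterm
    rw [← hqdef]
    have hc2 : ((2 ^ ℓ : ℕ) : ℝ) = (2 : ℝ) ^ ℓ := by push_cast; ring
    rw [hc2]
    have hqsub : q ^ (n - ℓ) = q ^ n * (q ^ ℓ)⁻¹ := pow_sub₀ q hq.ne' hℓn
    rw [hqsub]
    have h2n : q ^ (2 * n) = (q ^ n) ^ 2 := pow_mul' q 2 n
    rw [h2n]
    ring
  refine ⟨hsum, key, ?_⟩
  -- limit part
  have hnorm1 : ∀ n, ‖f n 1‖ ^ 2 = q ^ (2 * n) := by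
    intro n
    rw [hf1 n, ← Complex.ofReal_pow, Complex.norm_real,
      Real.norm_of_nonneg (by positivity), ← pow_mul, Nat.mul_comm]
  have heq : ∀ n, (‖f n 1‖ ^ 2 +
      ∑' k : {k : ℕ // 1 < k}, ((k.1 : ℝ)) ^ (2 * β) * ‖f n k.1‖ ^ 2) / ‖f n 1‖ ^ 2
      = 1 + ∑ ℓ ∈ Finset.Icc 1 n, dterm κ a b β ℓ := by
    intro n
    rw [key n, hnorm1 n]
    have hqn : q ^ (2 * n) ≠ 0 := by positivity
    field_simp
  simp only [heq]
  -- tsum over subtype = tsum of shifted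
  have hshift : Summable (fun i : ℕ => dterm κ a b β (i + 1)) :=
    (summable_nat_add_iff 1).mpr hsum
  have htsum_eq : (∑' ℓ : {ℓ : ℕ // 1 ≤ ℓ}, dterm κ a b β ℓ.1)
      = ∑' i : ℕ, dterm κ a b β (i + 1) := by
    rw [← Equiv.tsum_eq (Equiv.mk
      (fun i : ℕ => (⟨i + 1, Nat.succ_le_succ (Nat.zero_le i)⟩ : {ℓ : ℕ // 1 ≤ ℓ}))
      (fun x => x.1 - 1) (fun i => by simp)
      (fun x => Subtype.ext (Nat.succ_pred_eq_of_pos x.2)))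
      (fun ℓ : {ℓ : ℕ // 1 ≤ ℓ} => dterm κ a b β ℓ.1)]
    rfl
  rw [htsum_eq]
  have hpart : ∀ n, ∑ ℓ ∈ Finset.Icc 1 n, dterm κ a b β ℓ
      = ∑ i ∈ Finset.range n, dterm κ a b β (i + 1) := by
    intro n
    rw [← Finset.Ico_add_one_right_eq_Icc, Finset.sum_Ico_eq_sum_range]
    simp [Nat.add_comm]
  simp only [hpart]
  exact (tendsto_const_nhds.add hshift.hasSum.tendsto_sum_nat)
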